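/- For seven vectors v1,...,v7 ∈ F⁴ in general position, setting x = (13|2764) and y = (12|3754), with x ≠ 1 and all relevant determinants nonzero, one has (12|3574)/(13|2674) = (1 − y)/(1 − x). -/

import Mathlib

def det4 {F : Type*} [Field F] (u v w x : Fin 4 → F) : F :=
  Matrix.det (Matrix.of fun i j => ![u, v, w, x] j i)
/-- Projected cross ratio (i1 i2 | i3 i4 i5 i6). -/
def pcr {F : Type*} [Field F] (a b c d e f : Fin 4 → F) : F :=
  det4 a b c e * det4 a b d f / (det4 a b c f * det4 a b d e)

lemma plucker {F : Type*} [Field F] (a b c d e f : Fin 4 → F) :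
    det4 a b c d * det4 a b e f - det4 a b c e * det4 a b d f
      + det4 a b c f * det4 a b d e = 0 := by
  set_option maxHeartbeats 1000000 in
  simp [det4, Matrix.det_succ_row_zero, Fin.sum_univ_succ, Fin.succAbove, Fin.lt_def, -Fin.val_pos_iff, show (Fin.castSucc 2 : Fin 4) = 2 from rfl, show (Fin.succ 2 : Fin 4) = 3 from rfl, show ((2:Fin 3).castSucc : Fin 3) = 2 from rfl]
  ring

lemma swap_de {F : Type*} [Field F] (a b c d e f : Fin 4 → F)
    (h1 : det4 a b c f ≠ 0) (h2 : det4 a b d e ≠ 0) :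
    1 - pcr a b c d e f = pcr a b c e d f := by
  have hde : det4 a b e d = - det4 a b d e := by
    set_option maxHeartbeats 1000000 in
    simp [det4, Matrix.det_succ_row_zero, Fin.sum_univ_succ, Fin.succAbove, Fin.lt_def, -Fin.val_pos_iff, show (Fin.castSucc 2 : Fin 4) = 2 from rfl, show (Fin.succ 2 : Fin 4) = 3 from rfl, show ((2:Fin 3).castSucc : Fin 3) = 2 from rfl]
    ring
  have hed : det4 a b e d ≠ 0 := by rw [hde]; simpa using h2
  have hp := plucker a b c d e f
  unfold pcr
  rw [hde]
  field_simp
  linear_combination hp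

theorem stmt17 {F : Type*} [Field F] (v : Fin 7 → Fin 4 → F)
    (hgen : ∀ i j k l : Fin 7, i ≠ j → i ≠ k → i ≠ l → j ≠ k → j ≠ l → k ≠ l →
      det4 (v i) (v j) (v k) (v l) ≠ 0)
    (hx1 : pcr (v 0) (v 2) (v 1) (v 6) (v 5) (v 3) ≠ 1) :
    pcr (v 0) (v 1) (v 2) (v 4) (v 6) (v 3)
        / pcr (v 0) (v 2) (v 1) (v 5) (v 6) (v 3)
      = (1 - pcr (v 0) (v 1) (v 2) (v 6) (v 4) (v 3))
        / (1 - pcr (v 0) (v 2) (v 1) (v 6) (v 5) (v 3)) := by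
  rw [swap_de (v 0) (v 1) (v 2) (v 6) (v 4) (v 3) (by apply hgen <;> decide)
        (by apply hgen <;> decide),
      swap_de (v 0) (v 2) (v 1) (v 6) (v 5) (v 3) (by apply hgen <;> decide)
        (by apply hgen <;> decide)]
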